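/- Let $d \ge 3$. There exists a constant $C > 0$, depending only on $C_+$ and $d$, such that the following holds: for every $W \in \Omega(\gamma, L, A_*, B_*, V_\infty)$, every $t > 0$, every $s \in (0, t/2]$, and every real number $\xi_1$ satisfying $\xi_1 = \langle W \rangle_{s,t}$ and $\xi_1 < W(t)$, one has $0 < W(t) - \xi_1 \le \frac{C}{1+t}(\gamma + \gamma^3 A_*) + L^{-(d-1)} \frac{B_*}{1 + t/L}$. -/

import Mathlib

open MeasureTheory Real

/-- Time average `⟨W⟩_{s,t} = (t-s)⁻¹ ∫_s^t W(σ) dσ`. -/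
noncomputable def avg (W : ℝ → ℝ) (s t : ℝ) : ℝ :=
  (t - s)⁻¹ * ∫ σ in s..t, W σ

/-- The class `Ω(γ, L, A_*, B_*, V∞)` (with decay rates `C₊ ≤ C₋`):
Lipschitz functions `W : [0,∞) → [V∞/2, V∞)` with `W(0) = V₀ = V∞ - γ` satisfying
the two-sided decay estimates of the paper. -/
def memOmega (d : ℕ) (γ L A B Vinf Cp Cm : ℝ) (W : ℝ → ℝ) : Prop :=
  (∃ K : NNReal, LipschitzOnWith K W (Set.Ici 0)) ∧
  W 0 = Vinf - γ ∧
  (∀ t : ℝ, 0 ≤ t → Vinf / 2 ≤ W t ∧ W t < Vinf) ∧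
  (∀ t : ℝ, 0 ≤ t → Vinf - W t ≤
    γ * Real.exp (-Cp * t) + γ ^ 3 * (A / (1 + t) ^ (d + 2)) +
      B / (L ^ (d - 1) * (1 + t / L) ^ (d - 1))) ∧
  (∀ t : ℝ, 0 ≤ t → γ * Real.exp (-Cm * t) ≤ Vinf - W t)

private lemma hasDeriv_aux (c σ : ℝ) (hc : 0 < c) (hσ : 0 ≤ σ) :
    HasDerivAt (fun x : ℝ => -c * (1 + x / c)⁻¹) (((1 + σ / c) ^ 2)⁻¹) σ := by
  have hne : (1 + σ / c) ≠ 0 := by positivity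
  have h1 : HasDerivAt (fun x : ℝ => 1 + x / c) (1 / c) σ := by
    simpa using ((hasDerivAt_id σ).div_const c).const_add 1
  have h2 := (h1.inv hne).const_mul (-c)
  refine h2.congr_deriv ?_
  have hne2 : (1 + σ / c) ^ 2 ≠ 0 := pow_ne_zero _ hne
  field_simp

private lemma cont_aux (c a b : ℝ) (hc : 0 < c) (ha : 0 ≤ a) :
    ContinuousOn (fun σ : ℝ => ((1 + σ / c) ^ 2)⁻¹) (Set.Icc a b) := by
  apply ContinuousOn.inv₀
  · fun_prop
  · intro x hx
    have hx0 : 0 ≤ x := le_trans ha hx.1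
    positivity

private lemma int_aux (c a b : ℝ) (hc : 0 < c) (ha : 0 ≤ a) (hab : a ≤ b) :
    (∫ σ in a..b, ((1 + σ / c) ^ 2)⁻¹) = c * ((1 + a / c)⁻¹ - (1 + b / c)⁻¹) := by
  have hicc : Set.uIcc a b = Set.Icc a b := Set.uIcc_of_le hab
  have hcont : ContinuousOn (fun σ : ℝ => ((1 + σ / c) ^ 2)⁻¹) (Set.uIcc a b) := by
    rw [hicc]; exact cont_aux c a b hc ha
  rw [intervalIntegral.integral_eq_sub_of_hasDerivAt
    (f := fun x : ℝ => -c * (1 + x / c)⁻¹)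
    (fun σ hσ => hasDeriv_aux c σ hc (by rw [hicc] at hσ; exact le_trans ha hσ.1))
    (hcont.intervalIntegrable)]
  ring

private lemma exp_bound_aux (Cp : ℝ) (hCp : 0 < Cp) (x : ℝ) (hx : 0 ≤ x) :
    Real.exp (-Cp * x) ≤ (4 / (min 1 Cp) ^ 2) * ((1 + x) ^ 2)⁻¹ := by
  set m : ℝ := min 1 Cp with hm
  have hm0 : 0 < m := lt_min one_pos hCp
  have hm1 : m ≤ 1 := min_le_left _ _
  have hm2 : m ≤ Cp := min_le_right _ _
  have hy : 0 ≤ Cp * x := by positivity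
  have he : 1 + Cp * x / 2 ≤ Real.exp (Cp * x / 2) := by
    have := Real.add_one_le_exp (Cp * x / 2); linarith
  have hsq : Real.exp (Cp * x / 2) ^ 2 = Real.exp (Cp * x) := by
    rw [sq, ← Real.exp_add]; ring_nf
  have h2 : (1 + Cp * x) ^ 2 ≤ 4 * Real.exp (Cp * x) := by
    nlinarith [Real.exp_pos (Cp * x / 2)]
  have h1 : (m * (1 + x)) ^ 2 ≤ (1 + Cp * x) ^ 2 := by
    have hle : m * (1 + x) ≤ 1 + Cp * x := by nlinarith [mul_le_mul_of_nonneg_right hm2 hx]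
    have hnn : 0 ≤ m * (1 + x) := by positivity
    exact pow_le_pow_left₀ hnn hle 2
  have hfin : (1 + x) ^ 2 / Real.exp (Cp * x) ≤ 4 / m ^ 2 := by
    rw [div_le_div_iff₀ (Real.exp_pos _) (by positivity)]
    nlinarith
  have h4 : Real.exp (-Cp * x) = ((1 + x) ^ 2 / Real.exp (Cp * x)) * ((1 + x) ^ 2)⁻¹ := by
    rw [neg_mul, Real.exp_neg]
    have : (1 + x) ≠ 0 := by positivity
    field_simp
  rw [h4]
  exact mul_le_mul_of_nonneg_right hfin (by positivity)

set_option maxHeartbeats 1000000 in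
/-- Lemma 4.2 of the paper, case `d ≥ 3`: if a molecule hitting the right face of the
body at time `t` had its (modified) first pre-collision at a time `s ≤ t/2` (so that its
horizontal velocity satisfies `ξ₁ = ⟨W⟩_{s,t}`), then
`0 < W(t) - ξ₁ ≤ C (γ + γ³ A_*)/(1+t) + L^{-(d-1)} B_*/(1+t/L)`,
with `C` depending only on `C₊` and `d`. -/
theorem velocity_gap_early_precollision_dim_ge_three
    (d : ℕ) (hd : 3 ≤ d) (Cp : ℝ) (hCp : 0 < Cp) :
    ∃ C : ℝ, 0 < C ∧
      ∀ V₀ Vinf γ A B L Cm : ℝ, 0 < V₀ → V₀ < Vinf → γ = Vinf - V₀ →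
        0 < A → 0 < B → 1 ≤ L → Cp ≤ Cm →
        ∀ W : ℝ → ℝ, memOmega d γ L A B Vinf Cp Cm W →
          ∀ t : ℝ, 0 < t → ∀ s : ℝ, 0 < s → s ≤ t / 2 →
            ∀ ξ₁ : ℝ, ξ₁ = avg W s t → ξ₁ < W t →
              0 < W t - ξ₁ ∧
                W t - ξ₁ ≤ C / (1 + t) * (γ + γ ^ 3 * A) +
                  B / (L ^ (d - 1) * (1 + t / L)) := by
  set K : ℝ := 4 / (min 1 Cp) ^ 2 with hKdef
  have hK0 : 0 < K := by
    have : 0 < min 1 Cp := lt_min one_pos hCp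
    positivity
  refine ⟨max K 1, lt_of_lt_of_le one_pos (le_max_right _ _), ?_⟩
  intro V₀ Vinf γ A B L Cm hV₀ hVV hγ hA hB hL hCmle W hW t ht s hs hst ξ₁ hξ hlt
  obtain ⟨⟨Klip, hlip⟩, h0, hrange, hupper, hlower⟩ := hW
  refine ⟨by linarith, ?_⟩
  have hγ0 : 0 < γ := by rw [hγ]; linarith
  have hL0 : 0 < L := lt_of_lt_of_le one_pos hL
  have hst' : s < t := lt_of_le_of_lt hst (by linarith)
  have hτ : 0 < t - s := by linarith
  have h1t : (0:ℝ) < 1 + t := by linarith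
  have h1tL : (0:ℝ) < 1 + t / L := by positivity
  have h1s : (0:ℝ) < 1 + s := by linarith
  have h1sL : (0:ℝ) < 1 + s / L := by positivity
  have hLd : (0:ℝ) < L ^ (d - 1) := by positivity
  -- continuity / integrability of W on [s,t]
  have hWc : ContinuousOn W (Set.Icc s t) :=
    (hlip.continuousOn).mono (fun x hx => le_trans hs.le hx.1)
  have hWint : IntervalIntegrable W volume s t := by
    apply ContinuousOn.intervalIntegrable
    rwa [Set.uIcc_of_le hst'.le]
  have hWtint : IntervalIntegrable (fun σ => W t - W σ) volume s t :=
    intervalIntegrable_const.sub hWint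
  -- the majorant F
  set c₁ : ℝ := K * γ + γ ^ 3 * A with hc₁def
  set c₂ : ℝ := B / L ^ (d - 1) with hc₂def
  have hc₁0 : 0 ≤ c₁ := by positivity
  have hc₂0 : 0 ≤ c₂ := by positivity
  set F : ℝ → ℝ := fun σ => c₁ * ((1 + σ / 1) ^ 2)⁻¹ + c₂ * ((1 + σ / L) ^ 2)⁻¹ with hFdef
  have hFc1 : IntervalIntegrable (fun σ : ℝ => ((1 + σ / 1) ^ 2)⁻¹) volume s t := by
    apply ContinuousOn.intervalIntegrable
    rw [Set.uIcc_of_le hst'.le]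
    exact cont_aux 1 s t one_pos hs.le
  have hFc2 : IntervalIntegrable (fun σ : ℝ => ((1 + σ / L) ^ 2)⁻¹) volume s t := by
    apply ContinuousOn.intervalIntegrable
    rw [Set.uIcc_of_le hst'.le]
    exact cont_aux L s t hL0 hs.le
  have hFint : IntervalIntegrable F volume s t :=
    (hFc1.const_mul c₁).add (hFc2.const_mul c₂)
  -- pointwise bound
  have hptwise : ∀ σ ∈ Set.Icc s t, W t - W σ ≤ F σ := by
    intro σ hσ
    have hσ0 : 0 ≤ σ := le_trans hs.le hσ.1
    have h1σ : (0:ℝ) < 1 + σ := by linarith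
    have h1σL : (0:ℝ) < 1 + σ / L := by positivity
    have hWtub : W t < Vinf := (hrange t ht.le).2
    have hub := hupper σ hσ0
    have e1 : γ * Real.exp (-Cp * σ) ≤ γ * (K * ((1 + σ) ^ 2)⁻¹) :=
      mul_le_mul_of_nonneg_left (exp_bound_aux Cp hCp σ hσ0) hγ0.le
    have e2 : γ ^ 3 * (A / (1 + σ) ^ (d + 2)) ≤ γ ^ 3 * (A * ((1 + σ) ^ 2)⁻¹) := by
      apply mul_le_mul_of_nonneg_left _ (by positivity)
      rw [← div_eq_mul_inv]
      apply div_le_div_of_nonneg_left hA.le (by positivity)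
      exact pow_le_pow_right₀ (by linarith) (by omega)
    have e3 : B / (L ^ (d - 1) * (1 + σ / L) ^ (d - 1)) ≤ c₂ * ((1 + σ / L) ^ 2)⁻¹ := by
      have h1le : (1:ℝ) ≤ 1 + σ / L := by
        have : (0:ℝ) ≤ σ / L := by positivity
        linarith
      calc B / (L ^ (d - 1) * (1 + σ / L) ^ (d - 1))
          ≤ B / (L ^ (d - 1) * (1 + σ / L) ^ 2) := by
            apply div_le_div_of_nonneg_left hB.le (by positivity)
            apply mul_le_mul_of_nonneg_left _ hLd.le
            exact pow_le_pow_right₀ h1le (by omega)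
        _ = c₂ * ((1 + σ / L) ^ 2)⁻¹ := by
            rw [← div_div, div_eq_mul_inv (B / L ^ (d - 1)), hc₂def]
    have hsub : W t - W σ ≤ Vinf - W σ := by linarith
    calc W t - W σ ≤ Vinf - W σ := hsub
      _ ≤ γ * Real.exp (-Cp * σ) + γ ^ 3 * (A / (1 + σ) ^ (d + 2)) +
          B / (L ^ (d - 1) * (1 + σ / L) ^ (d - 1)) := hub
      _ ≤ γ * (K * ((1 + σ) ^ 2)⁻¹) + γ ^ 3 * (A * ((1 + σ) ^ 2)⁻¹) +
          c₂ * ((1 + σ / L) ^ 2)⁻¹ := by linarith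
      _ = F σ := by
          simp only [hFdef, hc₁def, div_one]
          ring
  -- integral comparison
  have hmono : (∫ σ in s..t, (W t - W σ)) ≤ ∫ σ in s..t, F σ :=
    intervalIntegral.integral_mono_on hst'.le hWtint hFint hptwise
  -- compute ∫ F
  have i1 : (∫ σ in s..t, ((1 + σ / 1) ^ 2)⁻¹) = 1 * ((1 + s / 1)⁻¹ - (1 + t / 1)⁻¹) :=
    int_aux 1 s t one_pos hs.le hst'.le
  have i2 : (∫ σ in s..t, ((1 + σ / L) ^ 2)⁻¹) = L * ((1 + s / L)⁻¹ - (1 + t / L)⁻¹) :=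
    int_aux L s t hL0 hs.le hst'.le
  have isum : (∫ σ in s..t, F σ) =
      c₁ * (1 * ((1 + s / 1)⁻¹ - (1 + t / 1)⁻¹)) +
        c₂ * (L * ((1 + s / L)⁻¹ - (1 + t / L)⁻¹)) := by
    rw [hFdef]
    rw [intervalIntegral.integral_add (hFc1.const_mul c₁) (hFc2.const_mul c₂),
      intervalIntegral.integral_const_mul, intervalIntegral.integral_const_mul, i1, i2]
  -- elementary bounds on the integrated quantities
  have b1 : 1 * ((1 + s / 1)⁻¹ - (1 + t / 1)⁻¹) ≤ (t - s) * (1 + t)⁻¹ := by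
    have heq : 1 * ((1 + s / 1)⁻¹ - (1 + t / 1)⁻¹) = (t - s) / ((1 + s) * (1 + t)) := by
      field_simp
      ring
    have heq2 : (t - s) * (1 + t)⁻¹ = (t - s) / (1 + t) := (div_eq_mul_inv _ _).symm
    rw [heq, heq2]
    apply div_le_div_of_nonneg_left hτ.le h1t
    nlinarith
  have b2 : L * ((1 + s / L)⁻¹ - (1 + t / L)⁻¹) ≤ (t - s) * (1 + t / L)⁻¹ := by
    have heq : L * ((1 + s / L)⁻¹ - (1 + t / L)⁻¹) =
        (t - s) / ((1 + s / L) * (1 + t / L)) := by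
      field_simp
      ring
    have heq2 : (t - s) * (1 + t / L)⁻¹ = (t - s) / (1 + t / L) := (div_eq_mul_inv _ _).symm
    rw [heq, heq2]
    apply div_le_div_of_nonneg_left hτ.le h1tL
    nlinarith [div_nonneg hs.le hL0.le]
  -- express W t - ξ₁ as an average
  have hξval : W t - ξ₁ = (t - s)⁻¹ * ∫ σ in s..t, (W t - W σ) := by
    rw [hξ, avg, intervalIntegral.integral_sub intervalIntegrable_const hWint,
      intervalIntegral.integral_const, smul_eq_mul]
    have : t - s ≠ 0 := ne_of_gt hτ
    field_simp
  -- main chain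
  have hmain : W t - ξ₁ ≤ c₁ * (1 + t)⁻¹ + c₂ * (1 + t / L)⁻¹ := by
    rw [hξval]
    calc (t - s)⁻¹ * ∫ σ in s..t, (W t - W σ)
        ≤ (t - s)⁻¹ * ∫ σ in s..t, F σ :=
          mul_le_mul_of_nonneg_left hmono (by positivity)
      _ = (t - s)⁻¹ * (c₁ * (1 * ((1 + s / 1)⁻¹ - (1 + t / 1)⁻¹)) +
            c₂ * (L * ((1 + s / L)⁻¹ - (1 + t / L)⁻¹))) := by rw [isum]
      _ ≤ (t - s)⁻¹ * (c₁ * ((t - s) * (1 + t)⁻¹) + c₂ * ((t - s) * (1 + t / L)⁻¹)) := by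
          apply mul_le_mul_of_nonneg_left _ (by positivity)
          exact add_le_add (mul_le_mul_of_nonneg_left b1 hc₁0)
            (mul_le_mul_of_nonneg_left b2 hc₂0)
      _ = c₁ * (1 + t)⁻¹ + c₂ * (1 + t / L)⁻¹ := by
          have hne : t - s ≠ 0 := ne_of_gt hτ
          field_simp
  -- conclude
  have hlast : c₂ * (1 + t / L)⁻¹ = B / (L ^ (d - 1) * (1 + t / L)) := by
    rw [← div_div, div_eq_mul_inv (B / L ^ (d - 1)), hc₂def]
  have hc₁le : c₁ * (1 + t)⁻¹ ≤ max K 1 / (1 + t) * (γ + γ ^ 3 * A) := by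
    have hK1 : K ≤ max K 1 := le_max_left _ _
    have h11 : (1:ℝ) ≤ max K 1 := le_max_right _ _
    have hc : c₁ ≤ max K 1 * (γ + γ ^ 3 * A) := by
      rw [hc₁def]
      have t1 : K * γ ≤ max K 1 * γ := mul_le_mul_of_nonneg_right hK1 hγ0.le
      have t2 : 1 * (γ ^ 3 * A) ≤ max K 1 * (γ ^ 3 * A) :=
        mul_le_mul_of_nonneg_right h11 (by positivity)
      nlinarith [t1, t2]
    have heq : max K 1 / (1 + t) * (γ + γ ^ 3 * A) =
        (max K 1 * (γ + γ ^ 3 * A)) * (1 + t)⁻¹ := by ring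
    rw [heq]
    exact mul_le_mul_of_nonneg_right hc (by positivity)
  linarith [hmain, hc₁le, hlast.le, hlast.ge]
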